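/- arXiv:2402.10672 — 3 statements merged into one kernel-verified Lean document; each statement's English description precedes it below -/
import Mathlib

section
/- Suppose that 𝔐 is absorbing to Δ and satisfies the Conditions (W) and the Condition (SCB). Then for any bounded measurable function f : X → ℝ, the mapping (x,a) ↦ ∫_{∂Δ} f(y) Q(dy|x,a) is continuous on K. -/
open MeasureTheory ProbabilityTheory Topology Filter Set
open scoped ENNReal

noncomputable section

variable {X A : Type*}
  [MeasurableSpace X] [TopologicalSpace X] [PolishSpace X] [BorelSpace X]
  [MeasurableSpace A] [TopologicalSpace A] [PolishSpace A] [BorelSpace A]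

/-- The set `K` of feasible state-action pairs. -/
def Kset (𝒜 : X → Set A) : Set (X × A) := {p | p.2 ∈ 𝒜 p.1}

/-- Histories of length `n`: `(x₀,a₀,…,x_{n-1},a_{n-1},x_n)`. -/
abbrev Hist (X A : Type*) (n : ℕ) : Type _ := (Fin n → X × A) × X

/-- A control policy: a sequence of stochastic kernels on `A` given histories,
concentrated on the feasible actions at the current state. -/
structure Policy (𝒜 : X → Set A) where
  kernel : ∀ n : ℕ, Kernel (Hist X A n) A
  markov : ∀ n : ℕ, IsMarkovKernel (kernel n)
  feasible : ∀ (n : ℕ) (h : Hist X A n), kernel n h (𝒜 h.2) = 1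

/-- The canonical space `Ω = (X × A)^ℕ`. -/
abbrev Traj (X A : Type*) : Type _ := ℕ → X × A

/-- The history of length `n` of a trajectory. -/
def histMap (X A : Type*) (n : ℕ) : Traj X A → Hist X A n :=
  fun ω => (fun i : Fin n => ω i, (ω n).1)

/-- `P` is the strategic probability measure of the policy `π` (for the transition
kernel `Q` and initial distribution `η`): the Ionescu-Tulcea characterization via
the initial law and the conditional laws of `(A_n, X_{n+1})` given `H_n`. -/
def IsStrategic (𝒜 : X → Set A) (Q : Kernel (X × A) X) (η : Measure X)
    (π : Policy 𝒜) (P : Measure (Traj X A)) : Prop :=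
  IsProbabilityMeasure P ∧
  P.map (fun ω => (ω 0).1) = η ∧
  ∀ (n : ℕ) (D : Set (Hist X A n)) (C : Set A) (B : Set X),
    MeasurableSet D → MeasurableSet C → MeasurableSet B →
    P {ω | histMap X A n ω ∈ D ∧ (ω n).2 ∈ C ∧ (ω (n + 1)).1 ∈ B}
      = ∫⁻ h in D, ∫⁻ a in C, Q (h.2, a) B ∂(π.kernel n h) ∂(P.map (histMap X A n))

/-- The set of strategic probability measures (as measures). -/
def stratSet (𝒜 : X → Set A) (Q : Kernel (X × A) X) (η : Measure X) :
    Set (Measure (Traj X A)) :=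
  {P | ∃ π : Policy 𝒜, IsStrategic 𝒜 Q η π P}

/-- The set `S` of strategic probability measures, carrying the topology of weak
convergence of probability measures on `Ω`. -/
def stratSetP (𝒜 : X → Set A) (Q : Kernel (X × A) X) (η : Measure X) :
    Set (ProbabilityMeasure (Traj X A)) :=
  {P | (P : Measure (Traj X A)) ∈ stratSet 𝒜 Q η}

/-- `P{T_Δ > t}`, the probability that the state process has not entered `Δ` by time `t`. -/
def survival (Δ : Set X) (P : Measure (Traj X A)) (t : ℕ) : ℝ≥0∞ :=
  P {ω | ∀ k ≤ t, (ω k).1 ∉ Δ}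

/-- The expected hitting time `E[T_Δ] = Σ_{t≥0} P{T_Δ > t}`. -/
def expHittingTime (Δ : Set X) (P : Measure (Traj X A)) : ℝ≥0∞ :=
  ∑' t : ℕ, survival Δ P t

/-- The control model is absorbing to `Δ`. -/
def IsAbsorbing (𝒜 : X → Set A) (Q : Kernel (X × A) X) (η : Measure X) (Δ : Set X) : Prop :=
  (∀ p : X × A, p ∈ Kset 𝒜 → p.1 ∈ Δ → Q p Δ = 1) ∧
  (∀ P ∈ stratSet 𝒜 Q η, expHittingTime Δ P < ⊤)

/-- The control model is uniformly absorbing to `Δ`. -/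
def IsUniformlyAbsorbing (𝒜 : X → Set A) (Q : Kernel (X × A) X) (η : Measure X)
    (Δ : Set X) : Prop :=
  IsAbsorbing 𝒜 Q η Δ ∧
  Tendsto
    (fun n : ℕ => ⨆ P ∈ stratSet 𝒜 Q η,
      ∑' t : ℕ, if n < t then survival Δ P t else 0)
    atTop (𝓝 0)

/-- The occupation measure associated with a (strategic) measure `P` on `Ω`:
`μ(Γ) = Σ_t P{X_t ∈ Δᶜ, (X_t,A_t) ∈ Γ}`. -/
def occ (Δ : Set X) (P : Measure (Traj X A)) : Measure (X × A) :=
  Measure.sum fun t : ℕ => (P.map fun ω => ω t).restrict (Δᶜ ×ˢ (univ : Set A))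

/-- The set `O` of occupation measures, viewed inside the space of finite
nonnegative Borel measures on `X × A` with the weak topology. -/
def occSet (𝒜 : X → Set A) (Q : Kernel (X × A) X) (η : Measure X) (Δ : Set X) :
    Set (FiniteMeasure (X × A)) :=
  {ν | ∃ P ∈ stratSet 𝒜 Q η, (ν : Measure (X × A)) = occ Δ P}

/-- Continuity of the natural projection mapping `𝔓 : S → O`, `P_π ↦ μ_π`
(`S` and `O` carrying their respective weak topologies). -/
def ProjContinuous (𝒜 : X → Set A) (Q : Kernel (X × A) X) (η : Measure X)
    (Δ : Set X) : Prop :=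
  ∀ g : ProbabilityMeasure (Traj X A) → FiniteMeasure (X × A),
    (∀ P ∈ stratSetP 𝒜 Q η, (g P : Measure (X × A)) = occ Δ (P : Measure (Traj X A))) →
    ContinuousOn g (stratSetP 𝒜 Q η)

/-- Basic standing assumptions of the control model: nonempty measurable action
sets, `K` measurable and containing the graph of a measurable selector, `Q` a
stochastic kernel and `η` a probability measure. -/
def BasicModel (𝒜 : X → Set A) (Q : Kernel (X × A) X) (η : Measure X) : Prop :=
  (∀ x, (𝒜 x).Nonempty) ∧ (∀ x, MeasurableSet (𝒜 x)) ∧ MeasurableSet (Kset 𝒜) ∧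
  (∃ f : X → A, Measurable f ∧ ∀ x, f x ∈ 𝒜 x) ∧
  IsMarkovKernel Q ∧ IsProbabilityMeasure η

/-- Conditions (W): the action multifunction is compact-valued, upper
semicontinuous and weakly measurable, and `Q` is weakly continuous on `K`. -/
def CondW (𝒜 : X → Set A) (Q : Kernel (X × A) X) : Prop :=
  (∀ x, IsCompact (𝒜 x)) ∧
  (∀ (x : X) (U : Set A), IsOpen U → 𝒜 x ⊆ U → ∀ᶠ y in 𝓝 x, 𝒜 y ⊆ U) ∧
  (∀ U : Set A, IsOpen U → MeasurableSet {x | (𝒜 x ∩ U).Nonempty}) ∧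
  (∀ f : BoundedContinuousFunction X ℝ,
    ContinuousOn (fun p : X × A => ∫ y, f y ∂(Q p)) (Kset 𝒜))

/-- Conditions (S): compact action sets, weakly measurable action multifunction,
and `a ↦ Q(B|x,a)` continuous on `A(x)` for every `x` and measurable `B`. -/
def CondS (𝒜 : X → Set A) (Q : Kernel (X × A) X) : Prop :=
  (∀ x, IsCompact (𝒜 x)) ∧
  (∀ U : Set A, IsOpen U → MeasurableSet {x | (𝒜 x ∩ U).Nonempty}) ∧
  (∀ (x : X) (B : Set X), MeasurableSet B → ContinuousOn (fun a => Q (x, a) B) (𝒜 x))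

/-- Condition (SCB): strong continuity of the transition kernel at the boundary
of `Δ`: for every measurable `B ⊆ ∂Δ`, `(x,a) ↦ Q(B|x,a)` is continuous on `K`. -/
def CondSCB (𝒜 : X → Set A) (Q : Kernel (X × A) X) (Δ : Set X) : Prop :=
  ∀ B : Set X, B ⊆ frontier Δ → MeasurableSet B →
    ContinuousOn (fun p : X × A => Q p B) (Kset 𝒜)

/-- `σ` disintegrates `μ` over its `X`-marginal: `μ = μ^X ⊗ σ`. -/
def IsDisintegration (μ : Measure (X × A)) (σ : Kernel X A) : Prop :=
  ∀ Γ : Set (X × A), MeasurableSet Γ →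
    μ Γ = ∫⁻ x, σ x {a | (x, a) ∈ Γ} ∂(μ.map Prod.fst)

/-- The set `C` of finite measures on `X × A` satisfying the characteristic
equations. -/
def charSet (𝒜 : X → Set A) (Q : Kernel (X × A) X) (η : Measure X) (Δ : Set X) :
    Set (FiniteMeasure (X × A)) :=
  {μ | (μ : Measure (X × A)) (Kset 𝒜)ᶜ = 0 ∧
    ∀ B : Set X, MeasurableSet B →
      (μ : Measure (X × A)) (B ×ˢ (univ : Set A))
        = η (B ∩ Δᶜ) + ∫⁻ p : X × A, Q p (B ∩ Δᶜ) ∂(μ : Measure (X × A))}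

/-- The `ws`-topology on finite measures on `X × A`: the coarsest topology making
`μ ↦ ∫ f dμ` continuous for every bounded Carathéodory function `f`. -/
def wsTopology : TopologicalSpace (FiniteMeasure (X × A)) :=
  ⨅ (f : X × A → ℝ) (_ : Measurable f) (_ : ∃ C : ℝ, ∀ p, |f p| ≤ C)
    (_ : ∀ x : X, Continuous fun a : A => f (x, a)),
    TopologicalSpace.induced
      (fun μ : FiniteMeasure (X × A) => ∫ p, f p ∂(μ : Measure (X × A))) inferInstance



lemma aux_integral_continuousOn {X P : Type*} [MeasurableSpace X] [TopologicalSpace P]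
    (κ : P → Measure X) (hκ : ∀ p, IsProbabilityMeasure (κ p))
    (S : Set X) (hS : MeasurableSet S) (K : Set P)
    (hcont : ∀ B : Set X, B ⊆ S → MeasurableSet B → ContinuousOn (fun p => κ p B) K)
    (f : X → ℝ) (hf : Measurable f) (C : ℝ) (hC : ∀ x, |f x| ≤ C) :
    ContinuousOn (fun p => ∫ y in S, f y ∂(κ p)) K := by
  classical
  -- the step functions
  set A : ℕ → ℤ → Set X := fun n k => {x | ⌊f x * (n + 1 : ℝ)⌋ = k} with hA
  have hAmeas : ∀ n k, MeasurableSet (A n k) := by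
    intro n k
    exact (hf.mul_const _).floor (measurableSet_singleton k)
  set Ks : ℕ → Finset ℤ := fun n => Finset.Icc ⌊(-C) * (n + 1 : ℝ)⌋ ⌊C * (n + 1 : ℝ)⌋ with hKs
  set H : ℕ → P → ℝ := fun n p =>
    ∑ k ∈ Ks n, ((k : ℝ) / (n + 1)) * ((κ p) (A n k ∩ S)).toReal with hH
  have hmpos : ∀ n : ℕ, (0 : ℝ) < (n + 1 : ℝ) := fun n => by positivity
  -- pointwise facts about s_n x = ⌊f x * (n+1)⌋/(n+1)
  have hmem : ∀ (n : ℕ) (x : X), ⌊f x * (n + 1 : ℝ)⌋ ∈ Ks n := by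
    intro n x
    have h1 : (-C) * (n + 1 : ℝ) ≤ f x * (n + 1 : ℝ) :=
      mul_le_mul_of_nonneg_right (neg_le_of_abs_le (hC x)) (hmpos n).le
    have h2 : f x * (n + 1 : ℝ) ≤ C * (n + 1 : ℝ) :=
      mul_le_mul_of_nonneg_right (le_of_abs_le (hC x)) (hmpos n).le
    simp only [hKs, Finset.mem_Icc]
    exact ⟨Int.floor_mono h1, Int.floor_mono h2⟩
  -- error bound
  have key : ∀ (n : ℕ) (p : P), dist (∫ y in S, f y ∂(κ p)) (H n p) ≤ 1 / (n + 1 : ℝ) := by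
    intro n p
    haveI := hκ p
    set μ := (κ p).restrict S with hμ
    set s : X → ℝ := fun x => (⌊f x * (n + 1 : ℝ)⌋ : ℝ) / (n + 1) with hs
    have hsmeas : Measurable s := by
      exact (measurable_from_top.comp ((hf.mul_const _).floor) : Measurable fun x => ((⌊f x * (n+1:ℝ)⌋ : ℤ) : ℝ)).div_const _
    have hfs : ∀ x, |f x - s x| ≤ 1 / (n + 1 : ℝ) := by
      intro x
      rw [abs_le]
      constructor
      · have := Int.floor_le (f x * (n + 1 : ℝ))
        have : s x ≤ f x := by
          rw [hs]
          rw [div_le_iff₀ (hmpos n)]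
          simpa using this
        nlinarith [hmpos n, one_div_pos.mpr (hmpos n)]
      · have h1 := Int.lt_floor_add_one (f x * (n + 1 : ℝ))
        have : f x - s x ≤ 1 / (n + 1 : ℝ) := by
          rw [hs, sub_le_iff_le_add, ← add_div, le_div_iff₀ (hmpos n)]
          nlinarith
        linarith
    have hint_f : Integrable f μ :=
      Integrable.mono' (integrable_const C) hf.aestronglyMeasurable
        (ae_of_all _ fun x => by simpa using hC x)
    have hint_s : Integrable s μ :=
      Integrable.mono' (integrable_const (C + 1)) hsmeas.aestronglyMeasurable
        (ae_of_all _ fun x => by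
          have h1 := hfs x
          have h2 := hC x
          have : |s x| ≤ |f x| + |f x - s x| := by
            have := abs_sub_abs_le_abs_sub (s x) (f x)
            rw [abs_sub_comm] at this
            linarith
          have hn : 1 / (n + 1 : ℝ) ≤ 1 := by
            rw [div_le_one (hmpos n)]; linarith [Nat.cast_nonneg (α := ℝ) n]
          simp only [Real.norm_eq_abs]
          linarith)
    -- s as a finite sum of indicators
    have hsum : s = fun x => ∑ k ∈ Ks n, (A n k).indicator
        (fun _ => (k : ℝ) / (n + 1)) x := by
      funext x
      rw [Finset.sum_eq_single (⌊f x * (n + 1 : ℝ)⌋)]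
      · rw [indicator_of_mem (by simp [hA])]
      · intro k _ hk
        exact indicator_of_notMem (by simp [hA, Ne.symm hk]) _
      · intro h; exact absurd (hmem n x) h
    have hintegral_s : ∫ x, s x ∂μ = H n p := by
      rw [hsum, integral_finset_sum]
      · rw [hH]
        refine Finset.sum_congr rfl fun k _ => ?_
        rw [integral_indicator (hAmeas n k), setIntegral_const, hμ,
          measureReal_def, Measure.restrict_apply (hAmeas n k), smul_eq_mul, mul_comm]
      · intro k _
        rw [integrable_indicator_iff (hAmeas n k)]
        exact integrableOn_const (measure_ne_top _ _)
    have hGdef : ∫ y in S, f y ∂(κ p) = ∫ x, f x ∂μ := rfl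
    rw [Real.dist_eq, hGdef, ← hintegral_s, ← integral_sub hint_f hint_s]
    have hbound : ‖∫ x, (f x - s x) ∂μ‖ ≤ (1 / (n + 1 : ℝ)) * (μ univ).toReal := by
      apply norm_integral_le_of_norm_le_const
      exact ae_of_all _ fun x => by simpa using hfs x
    have hμuniv : (μ univ).toReal ≤ 1 := by
      rw [hμ, Measure.restrict_apply MeasurableSet.univ, univ_inter]
      exact ENNReal.toReal_le_of_le_ofReal one_pos.le (by simpa using prob_le_one)
    calc |∫ x, (f x - s x) ∂μ| ≤ (1 / (n + 1 : ℝ)) * (μ univ).toReal := hbound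
      _ ≤ (1 / (n + 1 : ℝ)) * 1 := by
          apply mul_le_mul_of_nonneg_left hμuniv (by positivity)
      _ = 1 / (n + 1 : ℝ) := mul_one _
  -- each H n is continuous on K
  have hHcont : ∀ n, ContinuousOn (H n) K := by
    intro n
    apply continuousOn_finset_sum
    intro k _
    intro p hp
    have h1 : ContinuousWithinAt (fun p => κ p (A n k ∩ S)) K p :=
      hcont (A n k ∩ S) inter_subset_right ((hAmeas n k).inter hS) p hp
    have h2 : ContinuousWithinAt (fun p => ((κ p) (A n k ∩ S)).toReal) K p := by
      exact (ENNReal.tendsto_toReal (measure_ne_top _ _)).comp h1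
    exact continuousWithinAt_const.mul h2
  -- conclude by uniform convergence
  apply TendstoUniformlyOn.continuousOn (F := H) (p := atTop)
  · rw [Metric.tendstoUniformlyOn_iff]
    intro ε hε
    obtain ⟨N, hN⟩ := exists_nat_one_div_lt hε
    filter_upwards [eventually_ge_atTop N] with n hn p hp
    have h1 : (1 : ℝ) / (n + 1) ≤ 1 / (N + 1) := by
      apply one_div_le_one_div_of_le (by positivity)
      exact_mod_cast by omega
    calc dist (∫ y in S, f y ∂(κ p)) (H n p) ≤ 1 / (n + 1 : ℝ) := key n p
      _ ≤ 1 / (N + 1 : ℝ) := h1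
      _ < ε := hN
  · exact (Eventually.of_forall hHcont).frequently


/-- under Conditions (W) and (SCB), for any bounded measurable
`f : X → ℝ`, the map `(x,a) ↦ ∫_{∂Δ} f(y) Q(dy|x,a)` is continuous on `K`. -/
theorem continuousOn_integral_frontier
    (𝒜 : X → Set A) (Q : Kernel (X × A) X) (η : Measure X) (Δ : Set X)
    (hbasic : BasicModel 𝒜 Q η) (hΔ : MeasurableSet Δ)
    (habs : IsAbsorbing 𝒜 Q η Δ)
    (hW : CondW 𝒜 Q) (hscb : CondSCB 𝒜 Q Δ)
    (f : X → ℝ) (hf : Measurable f) (hbd : ∃ C : ℝ, ∀ x, |f x| ≤ C) :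
    ContinuousOn (fun p : X × A => ∫ y in frontier Δ, f y ∂(Q p)) (Kset 𝒜) := by
  obtain ⟨C, hC⟩ := hbd
  haveI : IsMarkovKernel Q := hbasic.2.2.2.2.1
  exact aux_integral_continuousOn (fun p => Q p) (fun p => inferInstance)
    (frontier Δ) isClosed_frontier.measurableSet (Kset 𝒜)
    (fun B hB hBm => hscb B hB hBm) f hf C hC

end
end

section
/- Suppose that 𝔐 is absorbing to Δ and satisfies the Conditions (W) and the Condition (SCB). Then for any bounded continuous function f : X → ℝ, the mapping (x,a) ↦ ∫_X f(y) 1_{Δᶜ}(y) Q(dy|x,a) is continuous on K. -/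
open MeasureTheory ProbabilityTheory Topology Filter Set
open scoped ENNReal

noncomputable section

variable {X A : Type*}
  [MeasurableSpace X] [TopologicalSpace X] [PolishSpace X] [BorelSpace X]
  [MeasurableSpace A] [TopologicalSpace A] [PolishSpace A] [BorelSpace A]

set_option linter.unusedSectionVars false
set_option linter.unusedVariables false
set_option maxHeartbeats 1000000

section Stmt4Aux

lemma stmt4_layer (ν : Measure X) (g : BoundedContinuousFunction X ℝ)
    (hg : ∀ x, 0 ≤ g x) {S : Set X} (hS : MeasurableSet S) :
    ∫⁻ x in S, ENNReal.ofReal (g x) ∂ν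
      = ∫⁻ t in Ioi (0:ℝ), ν ({x | t < g x} ∩ S) := by
  rw [lintegral_eq_lintegral_meas_lt (ν.restrict S) (Eventually.of_forall hg)
    g.continuous.measurable.aemeasurable]
  refine setLIntegral_congr_fun measurableSet_Ioi (fun t _ => ?_)
  rw [Measure.restrict_apply (measurableSet_lt measurable_const g.continuous.measurable)]

lemma stmt4_anti (ν : Measure X) (g : BoundedContinuousFunction X ℝ) (S : Set X) :
    Measurable (fun t : ℝ => ν ({x | t < g x} ∩ S)) :=
  Antitone.measurable (fun s t hst => measure_mono
    (inter_subset_inter_left _ (fun x hx => lt_of_le_of_lt hst hx)))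

lemma stmt4_bound (ν : Measure X) [IsProbabilityMeasure ν]
    (g : BoundedContinuousFunction X ℝ) (S : Set X) :
    ∫⁻ x in S, ENNReal.ofReal (g x) ∂ν ≤ ENNReal.ofReal ‖g‖ := by
  calc ∫⁻ x in S, ENNReal.ofReal (g x) ∂ν
      ≤ ∫⁻ _ in S, ENNReal.ofReal ‖g‖ ∂ν :=
        lintegral_mono fun x => ENNReal.ofReal_le_ofReal
          ((le_abs_self _).trans (g.norm_coe_le_norm x))
    _ = ENNReal.ofReal ‖g‖ * ν S := by rw [setLIntegral_const]
    _ ≤ ENNReal.ofReal ‖g‖ * 1 := mul_le_mul_right prob_le_one _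
    _ = ENNReal.ofReal ‖g‖ := mul_one _

lemma stmt4_I_eq (ν : Measure X) (g : BoundedContinuousFunction X ℝ)
    (hg : ∀ x, 0 ≤ g x) (S : Set X) :
    ∫ x in S, g x ∂ν = (∫⁻ x in S, ENNReal.ofReal (g x) ∂ν).toReal :=
  integral_eq_lintegral_of_nonneg_ae (Eventually.of_forall hg)
    g.continuous.measurable.aestronglyMeasurable

lemma stmt4_fr {Δ : Set X} (μ : Measure X) (μs : ℕ → Measure X)
    [IsProbabilityMeasure μ] [∀ n, IsProbabilityMeasure (μs n)]
    (hfr : ∀ B : Set X, B ⊆ frontier Δ → MeasurableSet B →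
      Tendsto (fun n => μs n B) atTop (𝓝 (μ B)))
    (g : BoundedContinuousFunction X ℝ) (hg : ∀ x, 0 ≤ g x)
    {B : Set X} (hB : B ⊆ frontier Δ) (hBm : MeasurableSet B) :
    Tendsto (fun n => ∫⁻ x in B, ENNReal.ofReal (g x) ∂(μs n)) atTop
      (𝓝 (∫⁻ x in B, ENNReal.ofReal (g x) ∂μ)) := by
  simp_rw [fun ν => stmt4_layer ν g hg hBm]
  refine tendsto_lintegral_of_dominated_convergence
    ((Ioc (0:ℝ) ‖g‖).indicator fun _ => (1:ℝ≥0∞))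
    (fun n => stmt4_anti (μs n) g B) ?_ ?_ ?_
  · intro n
    refine (ae_restrict_iff' measurableSet_Ioi).mpr (Eventually.of_forall fun t ht => ?_)
    by_cases h : t ≤ ‖g‖
    · rw [indicator_of_mem (mem_Ioc.mpr ⟨mem_Ioi.mp ht, h⟩)]
      exact prob_le_one
    · have : {x | t < g x} ∩ B = ∅ := by
        refine eq_empty_iff_forall_notMem.mpr fun x hx => ?_
        exact h (hx.1.trans_le ((le_abs_self _).trans (g.norm_coe_le_norm x))).le
      simp [this]
  · refine ne_top_of_le_ne_top ?_ (lintegral_mono' Measure.restrict_le_self le_rfl)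
    rw [lintegral_indicator measurableSet_Ioc]
    simp [Real.volume_Ioc]
  · refine (ae_restrict_iff' measurableSet_Ioi).mpr (Eventually.of_forall fun t _ => ?_)
    exact hfr _ ((inter_subset_right).trans hB)
      ((measurableSet_lt measurable_const g.continuous.measurable).inter hBm)

lemma stmt4_open {μ : Measure X} {μs : ℕ → Measure X}
    (hop : ∀ G : Set X, IsOpen G → μ G ≤ atTop.liminf fun n => μs n G)
    (g : BoundedContinuousFunction X ℝ) (hg : ∀ x, 0 ≤ g x)
    {U : Set X} (hU : IsOpen U) :
    ∫⁻ x in U, ENNReal.ofReal (g x) ∂μ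
      ≤ atTop.liminf fun n => ∫⁻ x in U, ENNReal.ofReal (g x) ∂(μs n) := by
  simp_rw [fun ν => stmt4_layer ν g hg hU.measurableSet]
  calc ∫⁻ t in Ioi (0:ℝ), μ ({x | t < g x} ∩ U)
      ≤ ∫⁻ t in Ioi (0:ℝ), atTop.liminf fun n => μs n ({x | t < g x} ∩ U) :=
        lintegral_mono fun t => hop _ ((isOpen_lt continuous_const g.continuous).inter hU)
    _ ≤ atTop.liminf fun n => ∫⁻ t in Ioi (0:ℝ), μs n ({x | t < g x} ∩ U) :=
        lintegral_liminf_le fun n => stmt4_anti (μs n) g _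


lemma stmt4_key {Δ : Set X} (hΔ : MeasurableSet Δ)
    (μ : ProbabilityMeasure X) (μs : ℕ → ProbabilityMeasure X)
    (hw : Tendsto μs atTop (𝓝 μ))
    (hfr : ∀ B : Set X, B ⊆ frontier Δ → MeasurableSet B →
      Tendsto (fun n => (μs n : Measure X) B) atTop (𝓝 ((μ : Measure X) B)))
    (g : BoundedContinuousFunction X ℝ) (hg : ∀ x, 0 ≤ g x) :
    Tendsto (fun n => ∫ x in Δᶜ, g x ∂(μs n : Measure X)) atTop
      (𝓝 (∫ x in Δᶜ, g x ∂(μ : Measure X))) := by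
  -- open-set liminf condition
  have hop : ∀ G : Set X, IsOpen G →
      (μ : Measure X) G ≤ atTop.liminf fun n => (μs n : Measure X) G := fun G hG =>
    le_measure_liminf_of_limsup_measure_compl_le hG.measurableSet
      (ProbabilityMeasure.limsup_measure_closed_le_of_tendsto hw (isClosed_compl_iff.mpr hG))
  have hne : ENNReal.ofReal ‖g‖ ≠ ⊤ := ENNReal.ofReal_ne_top
  -- set manipulations
  have h1 : interior Δ ∪ frontier Δ = closure Δ := by
    rw [frontier, union_diff_cancel (interior_subset.trans subset_closure)]
  have h2 : closure Δ ∪ interior Δᶜ = univ := by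
    rw [interior_compl]; exact union_compl_self _
  have d1 : Disjoint (interior Δ) (frontier Δ) := by
    rw [frontier]; exact disjoint_sdiff_self_right
  have d2 : Disjoint (closure Δ) (interior Δᶜ) := by
    rw [interior_compl]; exact disjoint_compl_right
  have d3 : Disjoint (interior Δᶜ) (Δᶜ ∩ frontier Δ) := by
    rw [interior_compl]
    exact disjoint_compl_left.mono_right (inter_subset_right.trans frontier_subset_closure)
  have hC : Δᶜ = interior Δᶜ ∪ (Δᶜ ∩ frontier Δ) := by
    apply subset_antisymm
    · intro x hx
      by_cases hcl : x ∈ closure Δ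
      · exact Or.inr ⟨hx, hcl, fun hi => hx (interior_subset hi)⟩
      · exact Or.inl (by rwa [interior_compl, mem_compl_iff])
    · exact union_subset interior_subset inter_subset_left
  have mf : MeasurableSet (frontier Δ) := isClosed_frontier.measurableSet
  have mD : MeasurableSet (Δᶜ ∩ frontier Δ) := hΔ.compl.inter mf
  -- decomposition of integrals
  have eqT : ∀ ν : Measure X, IsProbabilityMeasure ν →
      ∫ x, g x ∂ν = (∫ x in interior Δ, g x ∂ν + ∫ x in frontier Δ, g x ∂ν)
        + ∫ x in interior Δᶜ, g x ∂ν := by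
    intro ν hν
    have hint : Integrable (fun x => g x) ν := g.integrable ν
    rw [← setIntegral_univ (μ := ν) (f := fun x => g x), ← h2,
      setIntegral_union d2 measurableSet_interior hint.integrableOn hint.integrableOn, ← h1,
      setIntegral_union d1 mf hint.integrableOn hint.integrableOn]
  have eqC : ∀ ν : Measure X, IsProbabilityMeasure ν →
      ∫ x in Δᶜ, g x ∂ν = ∫ x in interior Δᶜ, g x ∂ν + ∫ x in Δᶜ ∩ frontier Δ, g x ∂ν := by
    intro ν hν
    have hint : Integrable (fun x => g x) ν := g.integrable ν
    conv_lhs => rw [hC]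
    rw [setIntegral_union d3 mD hint.integrableOn hint.integrableOn]
  -- bounds
  have Inn : ∀ (ν : Measure X) (S : Set X), 0 ≤ ∫ x in S, g x ∂ν := fun ν S =>
    integral_nonneg fun x => hg x
  have Ibd : ∀ (ν : Measure X), IsProbabilityMeasure ν → ∀ S : Set X,
      ∫ x in S, g x ∂ν ≤ ‖g‖ := by
    intro ν hν S
    rw [stmt4_I_eq ν g hg S]
    calc (∫⁻ x in S, ENNReal.ofReal (g x) ∂ν).toReal
        ≤ (ENNReal.ofReal ‖g‖).toReal := ENNReal.toReal_mono hne (stmt4_bound ν g S)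
      _ = ‖g‖ := ENNReal.toReal_ofReal (norm_nonneg g)
  -- convergent pieces
  have tS : Tendsto (fun n => ∫ x, g x ∂(μs n : Measure X)) atTop
      (𝓝 (∫ x, g x ∂(μ : Measure X))) :=
    ProbabilityMeasure.tendsto_iff_forall_integral_tendsto.mp hw g
  have toRealPiece : ∀ B : Set X, B ⊆ frontier Δ → MeasurableSet B →
      Tendsto (fun n => ∫ x in B, g x ∂(μs n : Measure X)) atTop
        (𝓝 (∫ x in B, g x ∂(μ : Measure X))) := by
    intro B hB hBm
    have h := stmt4_fr (Δ := Δ) (μ : Measure X) (fun n => (μs n : Measure X)) hfr g hg hB hBm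
    have h2' := (ENNReal.tendsto_toReal
      (((stmt4_bound (μ : Measure X) g B).trans_lt (lt_top_iff_ne_top.mpr hne)).ne)).comp h
    simpa only [Function.comp_def, ← stmt4_I_eq _ g hg] using h2'
  have tC := toRealPiece (frontier Δ) subset_rfl mf
  have tD := toRealPiece (Δᶜ ∩ frontier Δ) inter_subset_right mD
  -- liminf pieces
  have lim_open : ∀ U : Set X, IsOpen U →
      ∫ x in U, g x ∂(μ : Measure X)
        ≤ atTop.liminf fun n => ∫ x in U, g x ∂(μs n : Measure X) := by
    intro U hU
    have h := stmt4_open (μ := (μ : Measure X)) (μs := fun n => (μs n : Measure X)) hop g hg hU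
    have hliminf_ne : (atTop.liminf fun n => ∫⁻ x in U, ENNReal.ofReal (g x)
        ∂(μs n : Measure X)) ≠ ⊤ := by
      refine ne_top_of_le_ne_top hne ?_
      refine (liminf_le_liminf (Eventually.of_forall fun n =>
        stmt4_bound (μs n : Measure X) g U)).trans ?_
      simp [liminf_const]
    have := ENNReal.toReal_mono hliminf_ne h
    rw [← ENNReal.liminf_toReal_eq hne (Eventually.of_forall fun n =>
      stmt4_bound (μs n : Measure X) g U)] at this
    · simpa only [← stmt4_I_eq _ g hg] using this
  have lA := lim_open (interior Δ) isOpen_interior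
  have lB := lim_open (interior Δᶜ) isOpen_interior
  -- real-sequence endgame
  set S : ℕ → ℝ := fun n => ∫ x, g x ∂(μs n : Measure X) with hS
  set Af : ℕ → ℝ := fun n => ∫ x in interior Δ, g x ∂(μs n : Measure X) with hAf
  set Bf : ℕ → ℝ := fun n => ∫ x in interior Δᶜ, g x ∂(μs n : Measure X) with hBf
  set Cf : ℕ → ℝ := fun n => ∫ x in frontier Δ, g x ∂(μs n : Measure X) with hCf
  set Df : ℕ → ℝ := fun n => ∫ x in Δᶜ ∩ frontier Δ, g x ∂(μs n : Measure X) with hDf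
  have hBn : ∀ n, Bf n = S n - Af n - Cf n := by
    intro n
    have := eqT (μs n : Measure X) inferInstance
    simp only [hS, hAf, hBf, hCf]
    linarith
  have hb : ∫ x in interior Δᶜ, g x ∂(μ : Measure X)
      = (∫ x, g x ∂(μ : Measure X)) - (∫ x in interior Δ, g x ∂(μ : Measure X))
        - (∫ x in frontier Δ, g x ∂(μ : Measure X)) := by
    have := eqT (μ : Measure X) inferInstance
    linarith
  have bddA : atTop.IsBoundedUnder (· ≥ ·) Af :=
    isBoundedUnder_of ⟨0, fun n => Inn _ _⟩
  have tB : Tendsto Bf atTop (𝓝 (∫ x in interior Δᶜ, g x ∂(μ : Measure X))) := by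
    refine tendsto_of_le_liminf_of_limsup_le lB ?_
      (isBoundedUnder_of ⟨‖g‖, fun n => Ibd _ inferInstance _⟩)
      (isBoundedUnder_of ⟨0, fun n => Inn _ _⟩)
    refine le_of_forall_sub_le fun ε hε => ?_
    have key : atTop.limsup Bf ≤ (∫ x in interior Δᶜ, g x ∂(μ : Measure X)) + ε := by
      have ev1 : ∀ᶠ n in atTop, S n < (∫ x, g x ∂(μ : Measure X)) + ε / 3 :=
        tS.eventually_lt_const (by linarith)
      have ev2 : ∀ᶠ n in atTop,
          (∫ x in frontier Δ, g x ∂(μ : Measure X)) - ε / 3 < Cf n :=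
        tC.eventually_const_lt (by linarith)
      have ev3 : ∀ᶠ n in atTop,
          (∫ x in interior Δ, g x ∂(μ : Measure X)) - ε / 3 < Af n :=
        eventually_lt_of_lt_liminf (lt_of_lt_of_le (by linarith) lA) bddA
      refine limsup_le_of_le
        ((isBoundedUnder_of ⟨0, fun n => Inn _ _⟩ :
          atTop.IsBoundedUnder (· ≥ ·) Bf).isCoboundedUnder_le) ?_
      filter_upwards [ev1, ev2, ev3] with n h1 h2 h3
      rw [hBn n, hb]
      linarith
    linarith
  have := tB.add tD
  refine Tendsto.congr (fun n => (eqC (μs n : Measure X) inferInstance).symm) ?_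
  rw [eqC (μ : Measure X) inferInstance]
  exact this

end Stmt4Aux

/-- under Conditions (W) and (SCB), for any bounded continuous
`f : X → ℝ`, the map `(x,a) ↦ ∫_X f(y) 1_{Δᶜ}(y) Q(dy|x,a)` is continuous on `K`. -/
theorem continuousOn_integral_compl_absorbing
    (𝒜 : X → Set A) (Q : Kernel (X × A) X) (η : Measure X) (Δ : Set X)
    (hbasic : BasicModel 𝒜 Q η) (hΔ : MeasurableSet Δ)
    (habs : IsAbsorbing 𝒜 Q η Δ)
    (hW : CondW 𝒜 Q) (hscb : CondSCB 𝒜 Q Δ)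
    (f : BoundedContinuousFunction X ℝ) :
    ContinuousOn (fun p : X × A => ∫ y in Δᶜ, f y ∂(Q p)) (Kset 𝒜) := by
  have hQmk : IsMarkovKernel Q := hbasic.2.2.2.2.1
  intro p hp
  rw [ContinuousWithinAt]
  refine tendsto_iff_seq_tendsto.mpr fun u hu => ?_
  let μ : ProbabilityMeasure X := ⟨Q p, inferInstance⟩
  let μs : ℕ → ProbabilityMeasure X := fun n => ⟨Q (u n), inferInstance⟩
  have hw : Tendsto μs atTop (𝓝 μ) := by
    refine ProbabilityMeasure.tendsto_iff_forall_integral_tendsto.mpr fun h => ?_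
    exact Filter.Tendsto.comp (hW.2.2.2 h p hp) hu
  have hfr : ∀ B : Set X, B ⊆ frontier Δ → MeasurableSet B →
      Tendsto (fun n => (μs n : Measure X) B) atTop (𝓝 ((μ : Measure X) B)) :=
    fun B hB hBm => Filter.Tendsto.comp (hscb B hB hBm p hp) hu
  have hnn1 : ∀ x, 0 ≤ (f + BoundedContinuousFunction.const X ‖f‖) x := by
    intro x
    have := (abs_le.mp (Real.norm_eq_abs (f x) ▸ f.norm_coe_le_norm x)).1
    simp only [BoundedContinuousFunction.add_apply, BoundedContinuousFunction.const_apply]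
    linarith
  have hnn2 : ∀ x, 0 ≤ (BoundedContinuousFunction.const X ‖f‖) x := fun x => by
    simpa using norm_nonneg f
  have k1 := stmt4_key hΔ μ μs hw hfr (f + BoundedContinuousFunction.const X ‖f‖) hnn1
  have k2 := stmt4_key hΔ μ μs hw hfr (BoundedContinuousFunction.const X ‖f‖) hnn2
  have sub := k1.sub k2
  have eqν : ∀ ν : Measure X, IsProbabilityMeasure ν →
      ∫ x in Δᶜ, (f + BoundedContinuousFunction.const X ‖f‖) x ∂ν
        - ∫ x in Δᶜ, (BoundedContinuousFunction.const X ‖f‖) x ∂ν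
        = ∫ x in Δᶜ, f x ∂ν := by
    intro ν hν
    rw [← integral_sub ((f + BoundedContinuousFunction.const X ‖f‖).integrable ν).integrableOn
      ((BoundedContinuousFunction.const X ‖f‖).integrable ν).integrableOn]
    simp
  have goal : Tendsto (fun n => ∫ x in Δᶜ, f x ∂(μs n : Measure X)) atTop
      (𝓝 (∫ x in Δᶜ, f x ∂(μ : Measure X))) := by
    rw [← eqν (μ : Measure X) inferInstance]
    exact Tendsto.congr (fun n => eqν (μs n : Measure X) inferInstance) sub
  exact goal

end
end

section
/- Suppose that 𝔐 is absorbing to Δ and satisfies the Conditions (W) and the Condition (SCB). Then the set C of finite nonnegative measures on X×A satisfying the characteristic equations is closed in the w-topology. -/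
open MeasureTheory ProbabilityTheory Topology Filter Set
open scoped ENNReal

noncomputable section

variable {X A : Type*}
  [MeasurableSpace X] [TopologicalSpace X] [PolishSpace X] [BorelSpace X]
  [MeasurableSpace A] [TopologicalSpace A] [PolishSpace A] [BorelSpace A]

open scoped BoundedContinuousFunction NNReal
set_option linter.unusedSectionVars false
set_option maxHeartbeats 1000000

lemma isClosed_Kset (𝒜 : X → Set A) (h1 : ∀ x, IsCompact (𝒜 x))
    (h2 : ∀ (x : X) (U : Set A), IsOpen U → 𝒜 x ⊆ U → ∀ᶠ y in 𝓝 x, 𝒜 y ⊆ U) :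
    IsClosed (Kset 𝒜) := by
  rw [← isOpen_compl_iff, isOpen_iff_mem_nhds]
  rintro ⟨x, a⟩ ha
  have ha' : a ∉ 𝒜 x := ha
  obtain ⟨U, V, hU, hV, hAU, haV, hUV⟩ :=
    SeparatedNhds.of_isCompact_isCompact (h1 x) isCompact_singleton
      (disjoint_singleton_right.mpr ha')
  rw [nhds_prod_eq]
  filter_upwards [prod_mem_prod (h2 x U hU hAU) (hV.mem_nhds (haV rfl))]
  rintro ⟨y, b⟩ ⟨hy, hb⟩ (hyb : b ∈ 𝒜 y)
  exact Set.disjoint_left.mp hUV (hy hyb) hb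


lemma measurable_lintegral_kernel (Q : Kernel (X × A) X) {S : Set X} (hS : MeasurableSet S)
    (f : X →ᵇ ℝ≥0) :
    Measurable fun p : X × A => ∫⁻ y in S, (f y : ℝ≥0∞) ∂(Q p) := by
  have hind : Measurable (S.indicator fun y => (f y : ℝ≥0∞)) :=
    (f.measurable_coe_ennreal_comp).indicator hS
  simp_rw [← lintegral_indicator hS]
  exact (Measure.measurable_lintegral hind).comp (Q.measurable)


lemma continuousOn_boundary_lintegral (𝒜 : X → Set A) (Q : Kernel (X × A) X) (Δ : Set X)
    [IsMarkovKernel Q]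
    (hscb : ∀ B : Set X, B ⊆ frontier Δ → MeasurableSet B →
      ContinuousOn (fun p : X × A => Q p B) (Kset 𝒜))
    {B : Set X} (hBsub : B ⊆ frontier Δ) (hB : MeasurableSet B) (f : X →ᵇ ℝ≥0) :
    ContinuousOn (fun p : X × A => ∫⁻ y in B, (f y : ℝ≥0∞) ∂(Q p)) (Kset 𝒜) := by
  set c : ℝ := ‖f.comp ((↑) : ℝ≥0 → ℝ) isometry_subtype_coe.lipschitz‖ with hc
  have hfc : ∀ y, (f y : ℝ) ≤ c := by
    intro y
    have h := (f.comp ((↑) : ℝ≥0 → ℝ) isometry_subtype_coe.lipschitz).norm_coe_le_norm y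
    rw [Real.norm_eq_abs] at h
    exact (le_abs_self _).trans h
  have hmt : ∀ t : ℝ, MeasurableSet {y : X | t ≤ (f y : ℝ)} :=
    fun t => measurableSet_le measurable_const
      (NNReal.continuous_coe.comp f.continuous).measurable
  -- layer cake representation
  have lay : ∀ q : X × A, (∫⁻ y in B, (f y : ℝ≥0∞) ∂(Q q))
      = ∫⁻ t in Ioi (0:ℝ), Q q ({y | t ≤ (f y : ℝ)} ∩ B) := by
    intro q
    have h1 : (fun y => ((f y : ℝ≥0) : ℝ≥0∞)) = fun y => ENNReal.ofReal ((f y : ℝ)) := by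
      funext y; exact (ENNReal.ofReal_coe_nnreal (p := f y)).symm
    calc ∫⁻ y in B, (f y : ℝ≥0∞) ∂(Q q)
        = ∫⁻ y, ENNReal.ofReal ((f y : ℝ)) ∂((Q q).restrict B) := by rw [← h1]
      _ = ∫⁻ t in Ioi 0, ((Q q).restrict B) {y | t ≤ (f y : ℝ)} :=
          lintegral_eq_lintegral_meas_le _ (Eventually.of_forall fun y => (f y).coe_nonneg)
            ((NNReal.continuous_coe.comp f.continuous).measurable.aemeasurable)
      _ = ∫⁻ t in Ioi 0, Q q ({y | t ≤ (f y : ℝ)} ∩ B) := by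
          refine lintegral_congr fun t => ?_
          rw [Measure.restrict_apply (hmt t)]
  intro p hp
  rw [ContinuousWithinAt, tendsto_iff_seq_tendsto]
  intro u hu
  simp_rw [Function.comp_def, lay]
  refine tendsto_lintegral_of_dominated_convergence
    ((Ioc (0:ℝ) c).indicator fun _ => (1:ℝ≥0∞)) (fun n => ?_) (fun n => ?_) ?_ ?_
  · -- measurability in t
    exact Antitone.measurable fun t₁ t₂ hle =>
      measure_mono (inter_subset_inter_left _ (fun y hy => le_trans hle hy))
  · -- bound
    refine (ae_restrict_mem measurableSet_Ioi).mono fun t ht => ?_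
    by_cases htc : t ≤ c
    · rw [indicator_of_mem (mem_Ioc.mpr ⟨ht, htc⟩)]
      exact prob_le_one
    · have : {y : X | t ≤ (f y : ℝ)} = ∅ := by
        ext y; simp only [mem_setOf_eq, mem_empty_iff_false, iff_false, not_le]
        exact lt_of_le_of_lt (hfc y) (lt_of_not_ge htc)
      simp [this]
  · -- finiteness of bound integral
    rw [lintegral_indicator measurableSet_Ioc, setLIntegral_one,
      Measure.restrict_apply measurableSet_Ioc]
    exact ne_top_of_le_ne_top measure_Ioc_lt_top.ne (measure_mono inter_subset_left)
  · -- pointwise convergence via SCB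
    refine Eventually.of_forall fun t => ?_
    have hsub : {y : X | t ≤ (f y : ℝ)} ∩ B ⊆ frontier Δ := inter_subset_right.trans hBsub
    have := (hscb _ hsub ((hmt t).inter hB) p hp).tendsto.comp hu
    exact this


lemma exists_bcf_ext (𝒜 : X → Set A) (Q : Kernel (X × A) X) (Δ : Set X)
    [IsMarkovKernel Q] (hΔ : MeasurableSet Δ) (hK : IsClosed (Kset 𝒜))
    (hWQ : ∀ fb : BoundedContinuousFunction X ℝ,
      ContinuousOn (fun p : X × A => ∫ y, fb y ∂(Q p)) (Kset 𝒜))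
    (hscb : ∀ B : Set X, B ⊆ frontier Δ → MeasurableSet B →
      ContinuousOn (fun p : X × A => Q p B) (Kset 𝒜))
    (f : X →ᵇ ℝ≥0) :
    ∃ g : (X × A) →ᵇ ℝ≥0, ∀ p ∈ Kset 𝒜,
      (g p : ℝ≥0∞) = ∫⁻ y in Δᶜ, (f y : ℝ≥0∞) ∂(Q p) := by
  classical
  set fR : X →ᵇ ℝ := f.comp ((↑) : ℝ≥0 → ℝ) isometry_subtype_coe.lipschitz with hfR
  set c : ℝ := ‖fR‖ with hcdef
  have hc0 : 0 ≤ c := norm_nonneg _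
  have hfc : ∀ y, (f y : ℝ) ≤ c := by
    intro y
    have h := fR.norm_coe_le_norm y
    rw [Real.norm_eq_abs] at h
    exact (le_abs_self _).trans h
  -- the relevant sets
  set S : Set X := interior Δᶜ with hSdef
  set C : Set X := closure Δᶜ with hCdef
  set B1 : Set X := Δᶜ ∩ frontier Δ with hB1def
  set B2 : Set X := Δ ∩ closure Δᶜ with hB2def
  have hSopen : IsOpen S := isOpen_interior
  have hSmeas : MeasurableSet S := hSopen.measurableSet
  have hCclosed : IsClosed C := isClosed_closure
  have hB1meas : MeasurableSet B1 := hΔ.compl.inter isClosed_frontier.measurableSet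
  have hB2meas : MeasurableSet B2 := hΔ.inter hCclosed.measurableSet
  have hB1f : B1 ⊆ frontier Δ := inter_subset_right
  have hB2f : B2 ⊆ frontier Δ := by
    intro x hx
    rw [← frontier_compl]
    exact ⟨hx.2, fun hint => (interior_subset hint) hx.1⟩
  have hsplit1 : (Δᶜ : Set X) = S ∪ B1 := by
    apply Subset.antisymm
    · intro x hx
      by_cases hxS : x ∈ S
      · exact Or.inl hxS
      · refine Or.inr ⟨hx, ?_⟩
        rw [← frontier_compl]
        exact ⟨subset_closure hx, hxS⟩
    · exact union_subset interior_subset inter_subset_left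
  have hdisj1 : Disjoint S B1 := by
    rw [Set.disjoint_left]
    intro x hxS hxB
    have h2 := hxB.2
    rw [← frontier_compl] at h2
    exact h2.2 hxS
  have hsplit2 : C = Δᶜ ∪ B2 := by
    apply Subset.antisymm
    · intro x hx
      by_cases hxd : x ∈ Δ
      · exact Or.inr ⟨hxd, hx⟩
      · exact Or.inl hxd
    · exact union_subset subset_closure inter_subset_right
  have hdisj2 : Disjoint (Δᶜ : Set X) B2 := Set.disjoint_left.mpr fun x hx hxB => hx hxB.1
  -- lintegral abbreviations
  set IT : Set X → (X × A) → ℝ≥0∞ := fun T q => ∫⁻ y in T, (f y : ℝ≥0∞) ∂(Q q) with hIT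
  have hfin : ∀ (q : X × A) (T : Set X), IT T q ≠ ⊤ := fun q T =>
    (BoundedContinuousFunction.lintegral_lt_top_of_nnreal _ f).ne
  have hble : ∀ (q : X × A) (T : Set X), IT T q ≤ ENNReal.ofReal c := by
    intro q T
    have h1 : IT T q ≤ ∫⁻ _y in T, ENNReal.ofReal c ∂(Q q) := by
      refine lintegral_mono fun y => ?_
      rw [← ENNReal.ofReal_coe_nnreal]
      exact ENNReal.ofReal_le_ofReal (hfc y)
    refine h1.trans ?_
    rw [setLIntegral_const]
    calc ENNReal.ofReal c * Q q T ≤ ENNReal.ofReal c * 1 :=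
          mul_le_mul_right prob_le_one _
      _ = ENNReal.ofReal c := mul_one _
  set G' : X × A → ℝ := fun q => (IT Δᶜ q).toReal with hG'
  have hG'nonneg : ∀ q, 0 ≤ G' q := fun q => ENNReal.toReal_nonneg
  have hG'le : ∀ q, G' q ≤ c := fun q => ENNReal.toReal_le_of_le_ofReal hc0 (hble q _)
  -- approximating sequences
  have hSc : IsClosed Sᶜ := hSopen.isClosed_compl
  set rL : ℕ → X →ᵇ ℝ := fun m =>
    fR * (1 - (hSc.apprSeq m).comp ((↑) : ℝ≥0 → ℝ) isometry_subtype_coe.lipschitz) with hrLdef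
  set rU : ℕ → X →ᵇ ℝ := fun m =>
    fR * ((hCclosed.apprSeq m).comp ((↑) : ℝ≥0 → ℝ) isometry_subtype_coe.lipschitz) with hrUdef
  have hrL : ∀ m y, rL m y = (f y : ℝ) * (1 - (hSc.apprSeq m y : ℝ)) := fun m y => rfl
  have hrU : ∀ m y, rU m y = (f y : ℝ) * (hCclosed.apprSeq m y : ℝ) := fun m y => rfl
  have haL01 : ∀ m y, (0:ℝ) ≤ (hSc.apprSeq m y : ℝ) ∧ (hSc.apprSeq m y : ℝ) ≤ 1 := fun m y =>
    ⟨(hSc.apprSeq m y).coe_nonneg, by exact_mod_cast HasOuterApproxClosed.apprSeq_apply_le_one hSc m y⟩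
  have haU01 : ∀ m y, (0:ℝ) ≤ (hCclosed.apprSeq m y : ℝ) ∧ (hCclosed.apprSeq m y : ℝ) ≤ 1 :=
    fun m y => ⟨(hCclosed.apprSeq m y).coe_nonneg,
      by exact_mod_cast HasOuterApproxClosed.apprSeq_apply_le_one hCclosed m y⟩
  have hrL_nonneg : ∀ m y, 0 ≤ rL m y := by
    intro m y; rw [hrL]
    have := haL01 m y
    have := (f y).coe_nonneg
    nlinarith [this]
  have hrU_nonneg : ∀ m y, 0 ≤ rU m y := by
    intro m y; rw [hrU]
    exact mul_nonneg (f y).coe_nonneg (haU01 m y).1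
  have hrL_le : ∀ m y, rL m y ≤ c := by
    intro m y; rw [hrL]
    have h1 := haL01 m y
    have h2 := (f y).coe_nonneg
    nlinarith [hfc y]
  have hrU_le : ∀ m y, rU m y ≤ c := by
    intro m y; rw [hrU]
    have h1 := haU01 m y
    have h2 := (f y).coe_nonneg
    nlinarith [hfc y]
  -- real integrals as toReal of lintegrals
  have hIeqL : ∀ (m : ℕ) (q : X × A),
      ∫ y, rL m y ∂(Q q) = (∫⁻ y, ENNReal.ofReal (rL m y) ∂(Q q)).toReal := fun m q =>
    integral_eq_lintegral_of_nonneg_ae (Eventually.of_forall (hrL_nonneg m))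
      (rL m).continuous.aestronglyMeasurable
  have hIeqU : ∀ (m : ℕ) (q : X × A),
      ∫ y, rU m y ∂(Q q) = (∫⁻ y, ENNReal.ofReal (rU m y) ∂(Q q)).toReal := fun m q =>
    integral_eq_lintegral_of_nonneg_ae (Eventually.of_forall (hrU_nonneg m))
      (rU m).continuous.aestronglyMeasurable
  -- pointwise inequalities
  have hptL_le : ∀ m y, ENNReal.ofReal (rL m y) ≤ S.indicator (fun y => ((f y : ℝ≥0) : ℝ≥0∞)) y := by
    intro m y
    by_cases hy : y ∈ S
    · rw [indicator_of_mem hy, hrL, ← ENNReal.ofReal_coe_nnreal]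
      refine ENNReal.ofReal_le_ofReal ?_
      have h1 := haL01 m y
      have h2 := (f y).coe_nonneg
      nlinarith
    · rw [indicator_of_notMem hy, hrL,
        HasOuterApproxClosed.apprSeq_apply_eq_one hSc m (by exact hy)]
      simp
  have hptU_ge : ∀ m y, C.indicator (fun y => ((f y : ℝ≥0) : ℝ≥0∞)) y ≤ ENNReal.ofReal (rU m y) := by
    intro m y
    by_cases hy : y ∈ C
    · rw [indicator_of_mem hy, hrU,
        HasOuterApproxClosed.apprSeq_apply_eq_one hCclosed m hy, ← ENNReal.ofReal_coe_nnreal]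
      simp
    · rw [indicator_of_notMem hy]
      exact zero_le
  -- pointwise limits
  have hptL_lim : ∀ y, Tendsto (fun m => ENNReal.ofReal (rL m y)) atTop
      (𝓝 (S.indicator (fun y => ((f y : ℝ≥0) : ℝ≥0∞)) y)) := by
    intro y
    have h0 := HasOuterApproxClosed.tendsto_apprSeq hSc
    rw [tendsto_pi_nhds] at h0
    have h1 : Tendsto (fun m => ((hSc.apprSeq m y : ℝ≥0) : ℝ)) atTop
        (𝓝 ((Sᶜ.indicator (fun _ => (1:ℝ≥0)) y : ℝ≥0) : ℝ)) := NNReal.tendsto_coe.mpr (h0 y)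
    have h2 : Tendsto (fun m => ENNReal.ofReal ((f y : ℝ) * (1 - (hSc.apprSeq m y : ℝ)))) atTop
        (𝓝 (ENNReal.ofReal ((f y : ℝ) * (1 - ((Sᶜ.indicator (fun _ => (1:ℝ≥0)) y : ℝ≥0) : ℝ))))) :=
      (ENNReal.continuous_ofReal.tendsto _).comp
        ((tendsto_const_nhds.sub h1).const_mul _)
    simp_rw [hrL]
    convert h2 using 2
    by_cases hy : y ∈ S
    · rw [indicator_of_mem hy, indicator_of_notMem (by simpa using hy)]
      simp [ENNReal.ofReal_coe_nnreal]
    · rw [indicator_of_notMem hy, indicator_of_mem (by simpa using hy)]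
      simp
  have hptU_lim : ∀ y, Tendsto (fun m => ENNReal.ofReal (rU m y)) atTop
      (𝓝 (C.indicator (fun y => ((f y : ℝ≥0) : ℝ≥0∞)) y)) := by
    intro y
    have h0 := HasOuterApproxClosed.tendsto_apprSeq hCclosed
    rw [tendsto_pi_nhds] at h0
    have h1 : Tendsto (fun m => ((hCclosed.apprSeq m y : ℝ≥0) : ℝ)) atTop
        (𝓝 ((C.indicator (fun _ => (1:ℝ≥0)) y : ℝ≥0) : ℝ)) := NNReal.tendsto_coe.mpr (h0 y)
    have h2 : Tendsto (fun m => ENNReal.ofReal ((f y : ℝ) * (hCclosed.apprSeq m y : ℝ))) atTop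
        (𝓝 (ENNReal.ofReal ((f y : ℝ) * ((C.indicator (fun _ => (1:ℝ≥0)) y : ℝ≥0) : ℝ)))) :=
      (ENNReal.continuous_ofReal.tendsto _).comp (h1.const_mul _)
    simp_rw [hrU]
    convert h2 using 2
    by_cases hy : y ∈ C
    · rw [indicator_of_mem hy, indicator_of_mem hy]
      simp [ENNReal.ofReal_coe_nnreal]
    · rw [indicator_of_notMem hy, indicator_of_notMem hy]
      simp
  -- integral inequalities and limits
  have hL_le : ∀ (m : ℕ) (q : X × A), ∫ y, rL m y ∂(Q q) ≤ (IT S q).toReal := by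
    intro m q
    rw [hIeqL]
    refine ENNReal.toReal_mono (hfin q S) ?_
    refine (lintegral_mono (hptL_le m)).trans_eq ?_
    rw [lintegral_indicator hSmeas]
  have hU_ge : ∀ (m : ℕ) (q : X × A), (IT C q).toReal ≤ ∫ y, rU m y ∂(Q q) := by
    intro m q
    rw [hIeqU]
    refine ENNReal.toReal_mono ?_ ?_
    · refine ne_top_of_le_ne_top (b := ENNReal.ofReal c) ?_ ?_
      · exact ENNReal.ofReal_ne_top
      · refine (lintegral_mono fun y => ENNReal.ofReal_le_ofReal (hrU_le m y)).trans ?_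
        rw [lintegral_const]
        calc ENNReal.ofReal c * Q q univ ≤ ENNReal.ofReal c * 1 :=
              mul_le_mul_right prob_le_one _
          _ = ENNReal.ofReal c := mul_one _
    · rw [hIT]
      refine le_trans (le_of_eq ?_) (lintegral_mono (hptU_ge m))
      rw [lintegral_indicator hCclosed.measurableSet]
  -- limits of the approximating integrals
  have hL_tendsto : ∀ q : X × A,
      Tendsto (fun m => ∫ y, rL m y ∂(Q q)) atTop (𝓝 ((IT S q).toReal)) := by
    intro q
    simp_rw [hIeqL]
    have hENN : Tendsto (fun m => ∫⁻ y, ENNReal.ofReal (rL m y) ∂(Q q)) atTop (𝓝 (IT S q)) := by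
      have hrepr : IT S q = ∫⁻ y, S.indicator (fun y => ((f y : ℝ≥0) : ℝ≥0∞)) y ∂(Q q) :=
        (lintegral_indicator hSmeas _).symm
      rw [hrepr]
      refine tendsto_lintegral_of_dominated_convergence (fun _ => ENNReal.ofReal c)
        (fun m => ((rL m).continuous.measurable).ennreal_ofReal)
        (fun m => Eventually.of_forall fun y => ENNReal.ofReal_le_ofReal (hrL_le m y)) ?_
        (Eventually.of_forall hptL_lim)
      rw [lintegral_const]
      exact ENNReal.mul_ne_top ENNReal.ofReal_ne_top (by simp)
    exact (ENNReal.tendsto_toReal (hfin q S)).comp hENN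
  have hU_tendsto : ∀ q : X × A,
      Tendsto (fun m => ∫ y, rU m y ∂(Q q)) atTop (𝓝 ((IT C q).toReal)) := by
    intro q
    simp_rw [hIeqU]
    have hENN : Tendsto (fun m => ∫⁻ y, ENNReal.ofReal (rU m y) ∂(Q q)) atTop (𝓝 (IT C q)) := by
      have hrepr : IT C q = ∫⁻ y, C.indicator (fun y => ((f y : ℝ≥0) : ℝ≥0∞)) y ∂(Q q) :=
        (lintegral_indicator hCclosed.measurableSet _).symm
      rw [hrepr]
      refine tendsto_lintegral_of_dominated_convergence (fun _ => ENNReal.ofReal c)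
        (fun m => ((rU m).continuous.measurable).ennreal_ofReal)
        (fun m => Eventually.of_forall fun y => ENNReal.ofReal_le_ofReal (hrU_le m y)) ?_
        (Eventually.of_forall hptU_lim)
      rw [lintegral_const]
      exact ENNReal.mul_ne_top ENNReal.ofReal_ne_top (by simp)
    exact (ENNReal.tendsto_toReal (hfin q C)).comp hENN
  -- boundary terms are continuous on K
  have hM1cont : ContinuousOn (fun q => IT B1 q) (Kset 𝒜) :=
    continuousOn_boundary_lintegral 𝒜 Q Δ hscb hB1f hB1meas f
  have hM2cont : ContinuousOn (fun q => IT B2 q) (Kset 𝒜) :=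
    continuousOn_boundary_lintegral 𝒜 Q Δ hscb hB2f hB2meas f
  -- decompositions
  have hd1 : ∀ q, IT Δᶜ q = IT S q + IT B1 q := by
    intro q
    rw [hIT]
    conv_lhs => rw [hsplit1]
    exact lintegral_union hB1meas hdisj1
  have hd2 : ∀ q, IT C q = IT Δᶜ q + IT B2 q := by
    intro q
    rw [hIT]
    conv_lhs => rw [hsplit2]
    exact lintegral_union hB2meas hdisj2
  have hd1' : ∀ q, G' q = (IT S q).toReal + (IT B1 q).toReal := by
    intro q
    show (IT Δᶜ q).toReal = _
    rw [hd1 q, ENNReal.toReal_add (hfin q S) (hfin q B1)]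
  have hd2' : ∀ q, (IT C q).toReal = G' q + (IT B2 q).toReal := by
    intro q
    rw [hd2 q, ENNReal.toReal_add (hfin q Δᶜ) (hfin q B2)]
  -- main continuity statement
  have hGcont : ContinuousOn G' (Kset 𝒜) := by
    intro p hp
    rw [ContinuousWithinAt, tendsto_iff_seq_tendsto]
    intro u hu
    rw [Metric.tendsto_nhds]
    intro ε hε
    have hM1u : Tendsto (fun n => (IT B1 (u n)).toReal) atTop (𝓝 ((IT B1 p).toReal)) :=
      (ENNReal.tendsto_toReal (hfin p B1)).comp ((hM1cont p hp).tendsto.comp hu)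
    have hM2u : Tendsto (fun n => (IT B2 (u n)).toReal) atTop (𝓝 ((IT B2 p).toReal)) :=
      (ENNReal.tendsto_toReal (hfin p B2)).comp ((hM2cont p hp).tendsto.comp hu)
    have hM1e : ∀ᶠ n in atTop, |(IT B1 (u n)).toReal - (IT B1 p).toReal| < ε/4 := by
      have := Metric.tendsto_nhds.mp hM1u (ε/4) (by positivity)
      simpa [Real.dist_eq] using this
    have hM2e : ∀ᶠ n in atTop, |(IT B2 (u n)).toReal - (IT B2 p).toReal| < ε/4 := by
      have := Metric.tendsto_nhds.mp hM2u (ε/4) (by positivity)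
      simpa [Real.dist_eq] using this
    obtain ⟨m1, hm1⟩ := (Metric.tendsto_nhds.mp (hL_tendsto p) (ε/4) (by positivity)).exists
    obtain ⟨m2, hm2⟩ := (Metric.tendsto_nhds.mp (hU_tendsto p) (ε/4) (by positivity)).exists
    rw [Real.dist_eq, abs_lt] at hm1
    rw [Real.dist_eq, abs_lt] at hm2
    have hLu : Tendsto (fun n => ∫ y, rL m1 y ∂(Q (u n))) atTop (𝓝 (∫ y, rL m1 y ∂(Q p))) :=
      (hWQ (rL m1) p hp).tendsto.comp hu
    have hUu : Tendsto (fun n => ∫ y, rU m2 y ∂(Q (u n))) atTop (𝓝 (∫ y, rU m2 y ∂(Q p))) :=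
      (hWQ (rU m2) p hp).tendsto.comp hu
    have hLe : ∀ᶠ n in atTop, |∫ y, rL m1 y ∂(Q (u n)) - ∫ y, rL m1 y ∂(Q p)| < ε/4 := by
      have := Metric.tendsto_nhds.mp hLu (ε/4) (by positivity)
      simpa [Real.dist_eq] using this
    have hUe : ∀ᶠ n in atTop, |∫ y, rU m2 y ∂(Q (u n)) - ∫ y, rU m2 y ∂(Q p)| < ε/4 := by
      have := Metric.tendsto_nhds.mp hUu (ε/4) (by positivity)
      simpa [Real.dist_eq] using this
    filter_upwards [hM1e, hM2e, hLe, hUe] with n h1 h2 h3 h4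
    rw [Function.comp_apply, Real.dist_eq, abs_lt]
    rw [abs_lt] at h1 h2 h3 h4
    have e1 : ∫ y, rL m1 y ∂(Q (u n)) ≤ (IT S (u n)).toReal := hL_le m1 (u n)
    have e2 : (IT C (u n)).toReal ≤ ∫ y, rU m2 y ∂(Q (u n)) := hU_ge m2 (u n)
    have e3 := hd1' (u n)
    have e4 := hd2' (u n)
    have e5 := hd1' p
    have e6 := hd2' p
    have e7 : ∫ y, rL m1 y ∂(Q p) ≤ (IT S p).toReal := hL_le m1 p
    have e8 : (IT C p).toReal ≤ ∫ y, rU m2 y ∂(Q p) := hU_ge m2 p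
    have e9 : (0:ℝ) ≤ (IT B2 (u n)).toReal := ENNReal.toReal_nonneg
    constructor
    · -- lower bound
      nlinarith [hm1.1, hm1.2, h1.1, h1.2, h3.1, h3.2]
    · -- upper bound
      nlinarith [hm2.1, hm2.2, h2.1, h2.2, h4.1, h4.2]
  -- Tietze extension and clamping
  letI : PseudoMetricSpace (X × A) := TopologicalSpace.pseudoMetrizableSpacePseudoMetric (X × A)
  obtain ⟨gext, hgext⟩ := ContinuousMap.exists_restrict_eq (Y := ℝ) hK
    ⟨(Kset 𝒜).restrict G', continuousOn_iff_continuous_restrict.mp hGcont⟩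
  have hgK : ∀ p, p ∈ Kset 𝒜 → gext p = G' p := by
    intro p hp
    have h := DFunLike.congr_fun hgext (⟨p, hp⟩ : Kset 𝒜)
    exact h
  have hcont2 : Continuous fun q : X × A => max 0 (min (gext q) c) :=
    continuous_const.max ((map_continuous gext).min continuous_const)
  set gR : (X × A) →ᵇ ℝ := BoundedContinuousFunction.ofNormedAddCommGroup _ hcont2 c (fun q => by
    rw [Real.norm_eq_abs, abs_le]
    refine ⟨?_, max_le hc0 (min_le_right _ _)⟩
    have h0 : (0:ℝ) ≤ max 0 (min (gext q) c) := le_max_left _ _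
    linarith) with hgRdef
  refine ⟨gR.nnrealPart, fun p hp => ?_⟩
  have h1 : gR p = G' p := by
    show max 0 (min (gext p) c) = G' p
    rw [hgK p hp, min_eq_left (hG'le p), max_eq_right (hG'nonneg p)]
  have h2 : ((gR.nnrealPart p : ℝ≥0) : ℝ≥0∞) = ENNReal.ofReal (gR p) := rfl
  rw [h2, h1, hG']
  exact ENNReal.ofReal_toReal (hfin p _)


lemma mem_charSet_iff (𝒜 : X → Set A) (Q : Kernel (X × A) X) (η : Measure X) (Δ : Set X)
    [IsMarkovKernel Q] [IsProbabilityMeasure η] (hΔ : MeasurableSet Δ)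
    (μ : FiniteMeasure (X × A)) :
    μ ∈ charSet 𝒜 Q η Δ ↔ ((μ : Measure (X × A)) (Kset 𝒜)ᶜ = 0 ∧
      ∀ f : X →ᵇ ℝ≥0,
        ∫⁻ p : X × A, (f p.1 : ℝ≥0∞) ∂(μ : Measure (X × A))
          = (∫⁻ x in Δᶜ, (f x : ℝ≥0∞) ∂η)
            + ∫⁻ p : X × A, (∫⁻ y in Δᶜ, (f y : ℝ≥0∞) ∂(Q p)) ∂(μ : Measure (X × A))) := by
  set m : Measure (X × A) := (μ : Measure (X × A)) with hm
  set ν₁ : Measure X := m.map Prod.fst with hν₁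
  set ν₂ : Measure X := η.restrict Δᶜ + (m.bind Q).restrict Δᶜ with hν₂
  haveI : IsFiniteMeasure ν₁ := by rw [hν₁]; exact Measure.isFiniteMeasure_map m Prod.fst
  haveI hbf : IsFiniteMeasure (m.bind Q) := by
    constructor
    rw [Measure.bind_apply MeasurableSet.univ Q.measurable.aemeasurable]
    calc ∫⁻ p, Q p univ ∂m = ∫⁻ _p, 1 ∂m := by
          refine lintegral_congr fun p => ?_
          simp
      _ = m univ := by simp
      _ < ⊤ := measure_lt_top m univ
  haveI : IsFiniteMeasure ν₂ := by
    rw [hν₂]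
    infer_instance
  have key1 : ∀ B : Set X, MeasurableSet B → ν₁ B = m (B ×ˢ (univ : Set A)) := by
    intro B hB
    rw [hν₁, Measure.map_apply measurable_fst hB, Set.prod_univ]
  have key2 : ∀ B : Set X, MeasurableSet B →
      ν₂ B = η (B ∩ Δᶜ) + ∫⁻ p, Q p (B ∩ Δᶜ) ∂m := by
    intro B hB
    rw [hν₂, Measure.add_apply, Measure.restrict_apply hB, Measure.restrict_apply hB,
      Measure.bind_apply (hB.inter hΔ.compl) Q.measurable.aemeasurable]
  have key3 : ∀ f : X →ᵇ ℝ≥0,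
      ∫⁻ x, (f x : ℝ≥0∞) ∂ν₁ = ∫⁻ p : X × A, (f p.1 : ℝ≥0∞) ∂m := by
    intro f
    rw [hν₁, lintegral_map f.measurable_coe_ennreal_comp measurable_fst]
  have key4 : ∀ f : X →ᵇ ℝ≥0,
      ∫⁻ x, (f x : ℝ≥0∞) ∂ν₂
        = (∫⁻ x in Δᶜ, (f x : ℝ≥0∞) ∂η)
          + ∫⁻ p : X × A, (∫⁻ y in Δᶜ, (f y : ℝ≥0∞) ∂(Q p)) ∂m := by
    intro f
    rw [hν₂, lintegral_add_measure]
    congr 1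
    have hind : Measurable (Δᶜ.indicator fun y => ((f y : ℝ≥0) : ℝ≥0∞)) :=
      f.measurable_coe_ennreal_comp.indicator hΔ.compl
    calc ∫⁻ x, (f x : ℝ≥0∞) ∂((m.bind Q).restrict Δᶜ)
        = ∫⁻ x, Δᶜ.indicator (fun y => ((f y : ℝ≥0) : ℝ≥0∞)) x ∂(m.bind Q) := by
          rw [lintegral_indicator hΔ.compl]
      _ = ∫⁻ p, ∫⁻ x, Δᶜ.indicator (fun y => ((f y : ℝ≥0) : ℝ≥0∞)) x ∂(Q p) ∂m :=
          Measure.lintegral_bind Q.measurable.aemeasurable hind.aemeasurable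
      _ = ∫⁻ p : X × A, (∫⁻ y in Δᶜ, (f y : ℝ≥0∞) ∂(Q p)) ∂m := by
          refine lintegral_congr fun p => ?_
          rw [lintegral_indicator hΔ.compl]
  constructor
  · rintro ⟨h0, heq⟩
    refine ⟨h0, fun f => ?_⟩
    have hν : ν₁ = ν₂ := by
      ext B hB
      rw [key1 B hB, key2 B hB]
      exact heq B hB
    rw [← key3 f, hν, key4 f]
  · rintro ⟨h0, heqf⟩
    refine ⟨h0, fun B hB => ?_⟩
    have hν : ν₁ = ν₂ := by
      refine ext_of_forall_lintegral_eq_of_IsFiniteMeasure fun f => ?_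
      rw [key3 f, key4 f]
      exact heqf f
    rw [← key1 B hB, hν, key2 B hB]


/-- under Conditions (W) and (SCB), the set `C` of finite
measures satisfying the characteristic equations is closed in the weak topology. -/
theorem charSet_isClosed
    (𝒜 : X → Set A) (Q : Kernel (X × A) X) (η : Measure X) (Δ : Set X)
    (hbasic : BasicModel 𝒜 Q η) (hΔ : MeasurableSet Δ)
    (habs : IsAbsorbing 𝒜 Q η Δ)
    (hW : CondW 𝒜 Q) (hscb : CondSCB 𝒜 Q Δ) :
    IsClosed (charSet 𝒜 Q η Δ) := by
  obtain ⟨hne, hmeas𝒜, hKmeas, hsel, hQ, hη⟩ := hbasic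
  haveI := hQ
  haveI := hη
  have hKclosed : IsClosed (Kset 𝒜) := isClosed_Kset 𝒜 hW.1 hW.2.1
  have hchar : charSet 𝒜 Q η Δ
      = ⋂ f : X →ᵇ ℝ≥0, {μ : FiniteMeasure (X × A) |
          (μ : Measure (X × A)) (Kset 𝒜)ᶜ = 0 ∧
          ∫⁻ p : X × A, (f p.1 : ℝ≥0∞) ∂(μ : Measure (X × A))
            = (∫⁻ x in Δᶜ, (f x : ℝ≥0∞) ∂η)
              + ∫⁻ p : X × A, (∫⁻ y in Δᶜ, (f y : ℝ≥0∞) ∂(Q p)) ∂(μ : Measure (X × A))} := by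
    ext μ
    rw [mem_charSet_iff 𝒜 Q η Δ hΔ μ, mem_iInter]
    constructor
    · rintro ⟨h0, h1⟩ f
      exact ⟨h0, h1 f⟩
    · intro h
      exact ⟨(h 0).1, fun f => (h f).2⟩
  rw [hchar]
  refine isClosed_iInter fun f => ?_
  refine isClosed_of_closure_subset ?_
  intro μ hμ
  obtain ⟨u, hsu, hule⟩ := mem_closure_iff_ultrafilter.mp hμ
  have htend : Tendsto (fun ν : FiniteMeasure (X × A) => ν) (↑u) (𝓝 μ) := hule
  have hlint := FiniteMeasure.tendsto_iff_forall_lintegral_tendsto.mp htend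
  have husu : ∀ᶠ ν : FiniteMeasure (X × A) in ↑u,
      (ν : Measure (X × A)) (Kset 𝒜)ᶜ = 0 ∧
      ∫⁻ p : X × A, (f p.1 : ℝ≥0∞) ∂(ν : Measure (X × A))
        = (∫⁻ x in Δᶜ, (f x : ℝ≥0∞) ∂η)
          + ∫⁻ p : X × A, (∫⁻ y in Δᶜ, (f y : ℝ≥0∞) ∂(Q p)) ∂(ν : Measure (X × A)) := hsu
  -- Step 1: the limit measure is concentrated on K
  have h0 : (μ : Measure (X × A)) (Kset 𝒜)ᶜ = 0 := by
    set bK : ℕ → (X × A) →ᵇ ℝ≥0 := fun n =>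
      ((1 : (X × A) →ᵇ ℝ)
        - (hKclosed.apprSeq n).comp ((↑) : ℝ≥0 → ℝ) isometry_subtype_coe.lipschitz).nnrealPart
      with hbK
    have hbKval : ∀ n p, bK n p = Real.toNNReal (1 - (hKclosed.apprSeq n p : ℝ)) :=
      fun n p => rfl
    have hbK_onK : ∀ n p, p ∈ Kset 𝒜 → bK n p = 0 := by
      intro n p hp
      rw [hbKval, HasOuterApproxClosed.apprSeq_apply_eq_one hKclosed n hp]
      simp
    have hzero : ∀ n, ∫⁻ p, (bK n p : ℝ≥0∞) ∂(μ : Measure (X × A)) = 0 := by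
      intro n
      have hev : (fun ν : FiniteMeasure (X × A) =>
          ∫⁻ p, (bK n p : ℝ≥0∞) ∂(ν : Measure (X × A))) =ᶠ[↑u] fun _ => (0 : ℝ≥0∞) := by
        filter_upwards [husu] with ν hν
        rw [lintegral_eq_zero_iff (bK n).measurable_coe_ennreal_comp]
        rw [Filter.EventuallyEq, ae_iff]
        refine measure_mono_null (fun p hp => ?_) hν.1
        intro hpK
        refine hp ?_
        simp [hbK_onK n p hpK]
      exact tendsto_nhds_unique (Tendsto.congr' hev (hlint (bK n))) tendsto_const_nhds
    have hlim : Tendsto (fun n => ∫⁻ p, (bK n p : ℝ≥0∞) ∂(μ : Measure (X × A))) atTop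
        (𝓝 ((μ : Measure (X × A)) (Kset 𝒜)ᶜ)) := by
      have hrepr : (μ : Measure (X × A)) (Kset 𝒜)ᶜ
          = ∫⁻ p, ((Kset 𝒜)ᶜ).indicator (fun _ => (1 : ℝ≥0∞)) p ∂(μ : Measure (X × A)) := by
        rw [lintegral_indicator hKclosed.measurableSet.compl, setLIntegral_one]
      rw [hrepr]
      refine tendsto_lintegral_of_dominated_convergence (fun _ => 1)
        (fun n => (bK n).measurable_coe_ennreal_comp)
        (fun n => Eventually.of_forall fun p => ?_) (by simp [measure_ne_top])
        (Eventually.of_forall fun p => ?_)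
      · show (bK n p : ℝ≥0∞) ≤ (1 : ℝ≥0∞)
        rw [hbKval]
        have h1 : (1 - (hKclosed.apprSeq n p : ℝ)) ≤ 1 := by
          have := (hKclosed.apprSeq n p).coe_nonneg
          linarith
        calc ((Real.toNNReal (1 - (hKclosed.apprSeq n p : ℝ)) : ℝ≥0) : ℝ≥0∞)
            ≤ ((Real.toNNReal 1 : ℝ≥0) : ℝ≥0∞) := by
              exact_mod_cast Real.toNNReal_mono h1
          _ = 1 := by simp
      · show Tendsto (fun n => (bK n p : ℝ≥0∞)) atTop
            (𝓝 (((Kset 𝒜)ᶜ).indicator (fun _ => (1 : ℝ≥0∞)) p))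
        have h0' := HasOuterApproxClosed.tendsto_apprSeq hKclosed
        rw [tendsto_pi_nhds] at h0'
        have h1 : Tendsto (fun n => ((hKclosed.apprSeq n p : ℝ≥0) : ℝ)) atTop
            (𝓝 (((Kset 𝒜).indicator (fun _ => (1 : ℝ≥0)) p : ℝ≥0) : ℝ)) :=
          NNReal.tendsto_coe.mpr (h0' p)
        have h2 : Tendsto (fun n => (bK n p : ℝ≥0∞)) atTop
            (𝓝 ((Real.toNNReal (1 - (((Kset 𝒜).indicator (fun _ => (1 : ℝ≥0)) p : ℝ≥0) : ℝ))
              : ℝ≥0) : ℝ≥0∞)) := by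
          simp_rw [hbKval]
          exact ENNReal.tendsto_coe.mpr
            ((continuous_real_toNNReal.tendsto _).comp (tendsto_const_nhds.sub h1))
        convert h2 using 2
        by_cases hp : p ∈ Kset 𝒜
        · rw [indicator_of_notMem (by simpa using hp), indicator_of_mem hp]
          simp
        · rw [indicator_of_mem (by simpa using hp), indicator_of_notMem hp]
          simp
    have : (fun _ : ℕ => (0 : ℝ≥0∞)) = fun n => ∫⁻ p, (bK n p : ℝ≥0∞) ∂(μ : Measure (X × A)) := by
      funext n
      exact (hzero n).symm
    rw [← this] at hlim
    exact (tendsto_nhds_unique hlim tendsto_const_nhds).symm ▸ rfl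
  -- Step 2: the characteristic equation for the test function f
  obtain ⟨g, hg⟩ := exists_bcf_ext 𝒜 Q Δ hΔ hKclosed hW.2.2.2 hscb f
  have hcongr : ∀ ν : Measure (X × A), ν (Kset 𝒜)ᶜ = 0 →
      ∫⁻ p, (∫⁻ y in Δᶜ, (f y : ℝ≥0∞) ∂(Q p)) ∂ν = ∫⁻ p, (g p : ℝ≥0∞) ∂ν := by
    intro ν hν
    refine lintegral_congr_ae ?_
    rw [Filter.EventuallyEq, ae_iff]
    refine measure_mono_null (fun p hp => ?_) hν
    intro hpK
    exact hp (hg p hpK).symm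
  set fp : (X × A) →ᵇ ℝ≥0 := f.compContinuous (⟨Prod.fst, continuous_fst⟩ : C(X × A, X))
    with hfpdef
  have hevq : (fun ν : FiniteMeasure (X × A) =>
        ∫⁻ p, (fp p : ℝ≥0∞) ∂(ν : Measure (X × A))) =ᶠ[↑u]
      fun ν : FiniteMeasure (X × A) =>
        (∫⁻ x in Δᶜ, (f x : ℝ≥0∞) ∂η) + ∫⁻ p, (g p : ℝ≥0∞) ∂(ν : Measure (X × A)) := by
    filter_upwards [husu] with ν hν
    have h2 : ∫⁻ p, (fp p : ℝ≥0∞) ∂(ν : Measure (X × A))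
        = (∫⁻ x in Δᶜ, (f x : ℝ≥0∞) ∂η)
          + ∫⁻ p : X × A, (∫⁻ y in Δᶜ, (f y : ℝ≥0∞) ∂(Q p)) ∂(ν : Measure (X × A)) := hν.2
    rw [h2, hcongr ν hν.1]
  have ht2 : Tendsto (fun ν : FiniteMeasure (X × A) =>
        (∫⁻ x in Δᶜ, (f x : ℝ≥0∞) ∂η) + ∫⁻ p, (g p : ℝ≥0∞) ∂(ν : Measure (X × A))) (↑u)
      (𝓝 ((∫⁻ x in Δᶜ, (f x : ℝ≥0∞) ∂η) + ∫⁻ p, (g p : ℝ≥0∞) ∂(μ : Measure (X × A)))) :=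
    Tendsto.const_add _ (hlint g)
  have hkey : ∫⁻ p, (fp p : ℝ≥0∞) ∂(μ : Measure (X × A))
      = (∫⁻ x in Δᶜ, (f x : ℝ≥0∞) ∂η) + ∫⁻ p, (g p : ℝ≥0∞) ∂(μ : Measure (X × A)) :=
    tendsto_nhds_unique (Tendsto.congr' hevq (hlint fp)) ht2
  refine ⟨h0, ?_⟩
  have hfinal : ∫⁻ p : X × A, (f p.1 : ℝ≥0∞) ∂(μ : Measure (X × A))
      = ∫⁻ p, (fp p : ℝ≥0∞) ∂(μ : Measure (X × A)) := rfl
  rw [hfinal, hkey, hcongr (μ : Measure (X × A)) h0]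
end
end
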